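/- Fix q ≥ 2 and w ≥ 1. The number of arrays ((s_1,…,s_n),(ε_1,…,ε_n)) with s_i positive integers of total weight w satisfying q ∤ s_i for all i, and ε_i ∈ F_q^×, equals the number of arrays ((t_1,…,t_m),(δ_1,…,δ_m)) with t_i positive integers of total weight w satisfying t_i ≤ q for i < m and t_m < q, δ_i ∈ F_q^×, and δ_i = 1 whenever t_i = q. -/

import Mathlib

/-- Expand: replace each part `s` (with `q ∤ s`) by `s / q` copies of `q`
(decorated by `one`) followed by `s % q` (with the original decoration). -/
def stmt6ex {E : Type*} (q : ℕ) (one : E) (l : List (ℕ × E)) : List (ℕ × E) :=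
  l.flatMap fun x => List.replicate (x.1 / q) (q, one) ++ [(x.1 % q, x.2)]

/-- Merge: combine each maximal run of `q`s with the following part. -/
def stmt6mg {E : Type*} (q : ℕ) : List (ℕ × E) → List (ℕ × E)
  | [] => []
  | x :: rest =>
    if x.1 = q then
      match stmt6mg q rest with
      | [] => [x]
      | y :: r => (y.1 + q, y.2) :: r
    else x :: stmt6mg q rest

lemma stmt6ex_nil {E : Type*} (q : ℕ) (one : E) : stmt6ex q one [] = [] := rfl

lemma stmt6ex_cons {E : Type*} (q : ℕ) (one : E) (x : ℕ × E) (l : List (ℕ × E)) :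
    stmt6ex q one (x :: l) =
      List.replicate (x.1 / q) (q, one) ++ (x.1 % q, x.2) :: stmt6ex q one l := by
  simp [stmt6ex]

lemma stmt6ex_ne_nil {E : Type*} (q : ℕ) (one : E) {l : List (ℕ × E)} (h : l ≠ []) :
    stmt6ex q one l ≠ [] := by
  cases l with
  | nil => exact absurd rfl h
  | cons x tl =>
    rw [stmt6ex_cons]
    intro hc
    exact absurd (List.append_eq_nil_iff.mp hc).2 (List.cons_ne_nil _ _)

lemma stmt6ex_sum {E : Type*} (q : ℕ) (hq : 0 < q) (one : E) (l : List (ℕ × E)) :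
    ((stmt6ex q one l).map Prod.fst).sum = (l.map Prod.fst).sum := by
  induction l with
  | nil => rfl
  | cons x tl ih =>
    rw [stmt6ex_cons]
    simp only [List.map_append, List.sum_append, List.map_cons, List.sum_cons,
      List.map_replicate, List.sum_replicate, smul_eq_mul, ih]
    have := Nat.div_add_mod' x.1 q
    omega

lemma stmt6mg_replicate {E : Type*} (q : ℕ) (one : E) (k r : ℕ) (ε : E)
    (rest : List (ℕ × E)) (hr : r < q) :
    stmt6mg q (List.replicate k (q, one) ++ (r, ε) :: rest) =
      (k * q + r, ε) :: stmt6mg q rest := by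
  induction k with
  | zero =>
    simp only [List.replicate, List.nil_append, zero_mul, zero_add]
    rw [stmt6mg]
    simp [Nat.ne_of_lt hr]
  | succ k ih =>
    rw [List.replicate_succ, List.cons_append, stmt6mg]
    simp only [if_pos rfl, ih]
    ring_nf
    constructor <;> ring_nf

lemma stmt6mg_ex {E : Type*} (q : ℕ) (hq : 0 < q) (one : E) (l : List (ℕ × E))
    (h : ∀ x ∈ l, ¬ q ∣ x.1) : stmt6mg q (stmt6ex q one l) = l := by
  induction l with
  | nil => rfl
  | cons x tl ih =>
    rw [stmt6ex_cons, stmt6mg_replicate q one _ _ _ _ (Nat.mod_lt _ hq)]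
    rw [ih (fun y hy => h y (List.mem_cons_of_mem _ hy))]
    rw [Nat.div_add_mod' x.1 q]

/-- Key lemma: for a list satisfying the "bounded parts" conditions, merging then
expanding gives the list back, and the merged list has parts not divisible by `q`. -/
lemma stmt6ex_mg {E : Type*} (q : ℕ) (hq : 0 < q) (one : E) :
    ∀ l : List (ℕ × E),
    (∀ x ∈ l, 0 < x.1 ∧ x.1 ≤ q ∧ (x.1 = q → x.2 = one)) →
    (∀ x ∈ l.getLast?, x.1 < q) →
    stmt6ex q one (stmt6mg q l) = l ∧ ∀ x ∈ stmt6mg q l, 0 < x.1 ∧ ¬ q ∣ x.1 := by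
  intro l
  induction l with
  | nil => intro _ _; exact ⟨rfl, by simp [stmt6mg]⟩
  | cons x tl ih =>
    intro hall hlast
    obtain ⟨hx0, hxq, hxone⟩ := hall x (List.mem_cons_self)
    cases tl with
    | nil =>
      have hxlt : x.1 < q := hlast x (by simp [List.getLast?])
      have hxne : x.1 ≠ q := Nat.ne_of_lt hxlt
      have hmg : stmt6mg q [x] = [x] := by
        rw [stmt6mg]; simp only [if_neg hxne]; rw [stmt6mg]
      rw [hmg]
      constructor
      · rw [stmt6ex_cons, stmt6ex_nil]
        have h1 : x.1 / q = 0 := Nat.div_eq_of_lt hxlt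
        have h2 : x.1 % q = x.1 := Nat.mod_eq_of_lt hxlt
        simp [h1, h2]
      · intro y hy
        rw [List.mem_singleton] at hy
        subst hy
        exact ⟨hx0, fun hd => absurd (Nat.le_of_dvd hx0 hd) (not_le.mpr hxlt)⟩
    | cons z tl' =>
      have hlast' : ∀ y ∈ (z :: tl').getLast?, y.1 < q := by
        intro y hy
        apply hlast
        rwa [List.getLast?_cons_cons]
      obtain ⟨hex, hnd⟩ := ih (fun y hy => hall y (List.mem_cons_of_mem _ hy)) hlast'
      by_cases hxq' : x.1 = q
      · -- merged with head of mg tl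
        have hone : x.2 = one := hxone hxq'
        have hne : stmt6mg q (z :: tl') ≠ [] := by
          intro hc
          rw [hc, stmt6ex_nil] at hex
          exact absurd hex.symm (List.cons_ne_nil _ _)
        obtain ⟨y, r, hyr⟩ := List.exists_cons_of_ne_nil hne
        have hmg : stmt6mg q (x :: z :: tl') = (y.1 + q, y.2) :: r := by
          rw [stmt6mg]
          simp only [if_pos hxq', hyr]
        rw [hmg]
        obtain ⟨hy0, hynd⟩ := hnd y (hyr ▸ List.mem_cons_self)
        constructor
        · rw [stmt6ex_cons]
          have hd : (y.1 + q) / q = y.1 / q + 1 := Nat.add_div_right _ hq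
          have hm : (y.1 + q) % q = y.1 % q := Nat.add_mod_right _ _
          rw [hd, hm, List.replicate_succ, List.cons_append]
          rw [hyr, stmt6ex_cons] at hex
          rw [hex]
          have hxx : x = (q, one) := Prod.ext hxq' hone
          rw [hxx]
        · intro u hu
          rcases List.mem_cons.mp hu with h | h
          · subst h
            refine ⟨by omega, fun hd => hynd ?_⟩
            simpa using (Nat.dvd_sub hd (dvd_refl q))
          · exact hnd u (hyr ▸ List.mem_cons_of_mem _ h)
      · have hxlt : x.1 < q := lt_of_le_of_ne hxq hxq'
        have hmg : stmt6mg q (x :: z :: tl') = x :: stmt6mg q (z :: tl') := by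
          rw [stmt6mg]; simp [hxq']
        rw [hmg]
        constructor
        · rw [stmt6ex_cons]
          have h1 : x.1 / q = 0 := Nat.div_eq_of_lt hxlt
          have h2 : x.1 % q = x.1 := Nat.mod_eq_of_lt hxlt
          simp [h1, h2, hex]
        · intro u hu
          rcases List.mem_cons.mp hu with h | h
          · subst h
            exact ⟨hx0, fun hd => absurd (Nat.le_of_dvd hx0 hd) (not_le.mpr hxlt)⟩
          · exact hnd u h

lemma stmt6ex_cond {E : Type*} (q : ℕ) (hq : 0 < q) (one : E) :
    ∀ l : List (ℕ × E), (∀ x ∈ l, 0 < x.1 ∧ ¬ q ∣ x.1) →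
    (∀ x ∈ stmt6ex q one l, 0 < x.1 ∧ x.1 ≤ q ∧ (x.1 = q → x.2 = one)) ∧
    (∀ x ∈ (stmt6ex q one l).getLast?, x.1 < q) := by
  intro l
  induction l with
  | nil => intro _; exact ⟨by simp [stmt6ex], by simp [stmt6ex]⟩
  | cons y tl ih =>
    intro h
    obtain ⟨hy0, hynd⟩ := h y (List.mem_cons_self)
    obtain ⟨iha, ihb⟩ := ih (fun x hx => h x (List.mem_cons_of_mem _ hx))
    have hm0 : 0 < y.1 % q :=
      Nat.pos_of_ne_zero (fun hc => hynd (Nat.dvd_of_mod_eq_zero hc))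
    have hmlt : y.1 % q < q := Nat.mod_lt _ hq
    rw [stmt6ex_cons]
    constructor
    · intro x hx
      rcases List.mem_append.mp hx with h1 | h1
      · have hx' := List.eq_of_mem_replicate h1
        subst hx'
        exact ⟨hq, le_refl q, fun _ => rfl⟩
      · rcases List.mem_cons.mp h1 with h2 | h2
        · subst h2
          exact ⟨hm0, le_of_lt hmlt, fun hc => absurd hc (Nat.ne_of_lt hmlt)⟩
        · exact iha x h2
    · intro x hx
      rw [List.getLast?_append_of_ne_nil _ (List.cons_ne_nil _ _)] at hx
      cases htl : stmt6ex q one tl with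
      | nil =>
        rw [htl] at hx
        simp only [List.getLast?_singleton, Option.mem_def, Option.some.injEq] at hx
        rw [← hx]
        exact hmlt
      | cons a m =>
        rw [htl] at hx
        rw [List.getLast?_cons_cons] at hx
        exact ihb x (htl ▸ hx)

lemma stmt6_unzip_injective {α β : Type*} : Function.Injective (List.unzip : List (α × β) → List α × List β) := by
  intro a b h
  have ha := List.zip_unzip a
  have hb := List.zip_unzip b
  rw [← ha, ← hb, h]

/-- Fix `q ≥ 2` and `w ≥ 1`.  Let `E` be a set with `q - 1` elements (modelling
`F_q^×`) with a distinguished element `one`.  The number of arrays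
`((s_1, …, s_n), (ε_1, …, ε_n))` of total weight `w` with `q ∤ s_i` and
`ε_i ∈ E` equals the number of arrays `((t_1, …, t_m), (δ_1, …, δ_m))` of
total weight `w` with `t_i ≤ q` for `i < m`, `t_m < q`, `δ_i ∈ E`, and
`δ_i = one` whenever `t_i = q`. -/
theorem stmt6 (q w : ℕ) (hq : 2 ≤ q) (hw : 1 ≤ w)
    (E : Type*) [Fintype E] (hE : Fintype.card E = q - 1) (one : E) :
    {p : List ℕ × List E |
      p.1 ≠ [] ∧ p.2.length = p.1.length ∧ (∀ x ∈ p.1, 0 < x) ∧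
      p.1.sum = w ∧ ∀ x ∈ p.1, ¬ q ∣ x}.ncard =
    {p : List ℕ × List E |
      p.1 ≠ [] ∧ p.2.length = p.1.length ∧ (∀ x ∈ p.1, 0 < x) ∧
      p.1.sum = w ∧ (∀ x ∈ p.1.dropLast, x ≤ q) ∧
      (∀ x ∈ p.1.getLast?, x < q) ∧
      ∀ pr ∈ p.1.zip p.2, pr.1 = q → pr.2 = one}.ncard := by
  have hq0 : 0 < q := by omega
  set T1 : Set (List (ℕ × E)) :=
    {l | l ≠ [] ∧ (∀ x ∈ l, 0 < x.1 ∧ ¬ q ∣ x.1) ∧ (l.map Prod.fst).sum = w} with hT1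
  set T2 : Set (List (ℕ × E)) :=
    {l | l ≠ [] ∧ (∀ x ∈ l, 0 < x.1 ∧ x.1 ≤ q ∧ (x.1 = q → x.2 = one)) ∧
      (∀ x ∈ l.getLast?, x.1 < q) ∧ (l.map Prod.fst).sum = w} with hT2
  have hS1 : {p : List ℕ × List E |
      p.1 ≠ [] ∧ p.2.length = p.1.length ∧ (∀ x ∈ p.1, 0 < x) ∧
      p.1.sum = w ∧ ∀ x ∈ p.1, ¬ q ∣ x} = List.unzip '' T1 := by
    ext p
    constructor
    · rintro ⟨hne, hlen, hpos, hsum, hnd⟩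
      refine ⟨p.1.zip p.2, ?_, ?_⟩
      · have hf : (p.1.zip p.2).map Prod.fst = p.1 := List.map_fst_zip hlen.ge
        refine ⟨?_, ?_, ?_⟩
        · intro hc; rw [hc] at hf; exact hne hf.symm
        · intro x hx
          have hx1 : x.1 ∈ p.1 := hf ▸ List.mem_map_of_mem (f := Prod.fst) hx
          exact ⟨hpos _ hx1, hnd _ hx1⟩
        · rw [hf, hsum]
      · have hf : (p.1.zip p.2).map Prod.fst = p.1 := List.map_fst_zip hlen.ge
        have hs : (p.1.zip p.2).map Prod.snd = p.2 := List.map_snd_zip hlen.le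
        rw [List.unzip_eq_map]
        exact Prod.ext hf hs
    · rintro ⟨l, ⟨hne, hcond, hsum⟩, rfl⟩
      rw [List.unzip_eq_map]
      refine ⟨by simpa using hne, by simp, ?_, hsum, ?_⟩
      · intro x hx
        obtain ⟨y, hy, rfl⟩ := List.mem_map.mp hx
        exact (hcond y hy).1
      · intro x hx
        obtain ⟨y, hy, rfl⟩ := List.mem_map.mp hx
        exact (hcond y hy).2
  have hS2 : {p : List ℕ × List E |
      p.1 ≠ [] ∧ p.2.length = p.1.length ∧ (∀ x ∈ p.1, 0 < x) ∧
      p.1.sum = w ∧ (∀ x ∈ p.1.dropLast, x ≤ q) ∧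
      (∀ x ∈ p.1.getLast?, x < q) ∧
      ∀ pr ∈ p.1.zip p.2, pr.1 = q → pr.2 = one} = List.unzip '' T2 := by
    ext p
    constructor
    · rintro ⟨hne, hlen, hpos, hsum, hdl, hlast, hzip⟩
      have hf : (p.1.zip p.2).map Prod.fst = p.1 := List.map_fst_zip hlen.ge
      have hs : (p.1.zip p.2).map Prod.snd = p.2 := List.map_snd_zip hlen.le
      have hmem : ∀ y ∈ p.1, y ≤ q := by
        intro y hy
        have := List.dropLast_append_getLast hne
        rw [← this] at hy
        rcases List.mem_append.mp hy with h1 | h1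
        · exact hdl y h1
        · rw [List.mem_singleton] at h1
          subst h1
          exact le_of_lt (hlast _ (by rw [List.getLast?_eq_getLast hne]; rfl))
      refine ⟨p.1.zip p.2, ⟨?_, ?_, ?_, ?_⟩, ?_⟩
      · intro hc; rw [hc] at hf; exact hne hf.symm
      · intro x hx
        have hx1 : x.1 ∈ p.1 := hf ▸ List.mem_map_of_mem (f := Prod.fst) hx
        exact ⟨hpos _ hx1, hmem _ hx1, hzip x hx⟩
      · intro x hx
        apply hlast
        have hg : ((p.1.zip p.2).map Prod.fst).getLast? = p.1.getLast? := by rw [hf]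
        rw [← hg, List.getLast?_map, hx]
        rfl
      · rw [hf, hsum]
      · rw [List.unzip_eq_map]
        exact Prod.ext hf hs
    · rintro ⟨l, ⟨hne, hcond, hlast, hsum⟩, rfl⟩
      rw [List.unzip_eq_map]
      refine ⟨by simpa using hne, by simp, ?_, hsum, ?_, ?_, ?_⟩
      · intro x hx
        obtain ⟨y, hy, rfl⟩ := List.mem_map.mp hx
        exact (hcond y hy).1
      · intro x hx
        have hx' : x ∈ l.map Prod.fst := List.dropLast_subset _ hx
        obtain ⟨y, hy, rfl⟩ := List.mem_map.mp hx'
        exact (hcond y hy).2.1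
      · intro x hx
        simp only [List.getLast?_map, Option.mem_def, Option.map_eq_some_iff] at hx
        obtain ⟨y, hy, rfl⟩ := hx
        exact hlast y hy
      · intro pr hpr
        have : (l.map Prod.fst).zip (l.map Prod.snd) = l := by
          have := List.zip_unzip l
          rwa [List.unzip_eq_map] at this
        rw [this] at hpr
        exact (hcond pr hpr).2.2
  have hT2eq : T2 = stmt6ex q one '' T1 := by
    ext l
    constructor
    · rintro ⟨hne, hcond, hlast, hsum⟩
      obtain ⟨hex, hnd⟩ := stmt6ex_mg q hq0 one l hcond hlast
      refine ⟨stmt6mg q l, ⟨?_, hnd, ?_⟩, hex⟩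
      · intro hc
        rw [hc, stmt6ex_nil] at hex
        exact hne hex.symm
      · rw [← stmt6ex_sum q hq0 one (stmt6mg q l), hex, hsum]
    · rintro ⟨m, ⟨hne, hcond, hsum⟩, rfl⟩
      obtain ⟨ha, hb⟩ := stmt6ex_cond q hq0 one m hcond
      exact ⟨stmt6ex_ne_nil q one hne, ha, hb, by rw [stmt6ex_sum q hq0 one, hsum]⟩
  have hinj : Set.InjOn (stmt6ex q one) T1 := by
    intro a ha b hb hab
    have h1 := stmt6mg_ex q hq0 one a (fun x hx => (ha.2.1 x hx).2)
    have h2 := stmt6mg_ex q hq0 one b (fun x hx => (hb.2.1 x hx).2)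
    rw [← h1, ← h2, hab]
  rw [hS1, hS2, hT2eq,
    Set.ncard_image_of_injOn (stmt6_unzip_injective.injOn),
    Set.ncard_image_of_injOn (stmt6_unzip_injective.injOn),
    Set.ncard_image_of_injOn hinj]
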